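/- For every integer k, the following two identities hold in R((z)): (1) (z^{−1}|σ^{−1}α)^k = (z^{−1}|α)^k + (α_k − α_0)·(z^{−1}|α)^{k−1}; and (2) ((z^{−1}|σα)^k)^{−1} = ((z^{−1}|α)^k)^{−1} + (α_{k+1} − α_1)·((z^{−1}|α)^{k+1})^{−1}. -/

import Mathlib

variable {R : Type*} [CommRing R]

/-- The shifted power `(z⁻¹|α)^k` in the ring of formal Laurent series `R((z))`:
`∏_{i=1}^{k} (z⁻¹ − α_i)` for `k ≥ 0`, and `∏_{i=k+1}^{0} (z⁻¹ − α_i)⁻¹` for `k < 0`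
(each factor `z⁻¹ − α_i = z⁻¹(1 − α_i z)` is a unit, so `Ring.inverse` gives its inverse). -/
noncomputable def spow (α : ℤ → R) (k : ℤ) : LaurentSeries R :=
  if 0 ≤ k then
    ∏ i ∈ Finset.Icc 1 k, (HahnSeries.single (-1 : ℤ) (1 : R) - HahnSeries.C (α i))
  else
    ∏ i ∈ Finset.Icc (k + 1) 0,
      Ring.inverse (HahnSeries.single (-1 : ℤ) (1 : R) - HahnSeries.C (α i))

/-- The basic factor `z⁻¹ - a`. -/
noncomputable def ufac (a : R) : LaurentSeries R :=
  HahnSeries.single (-1 : ℤ) (1 : R) - HahnSeries.C a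

lemma isUnit_ufac (a : R) : IsUnit (ufac a) := by
  have h1 : ufac a = HahnSeries.single (-1 : ℤ) (1 : R) *
      (1 - HahnSeries.ofPowerSeries ℤ R (PowerSeries.C a * PowerSeries.X)) := by
    rw [ufac, mul_sub, mul_one, map_mul, HahnSeries.ofPowerSeries_C,
      HahnSeries.ofPowerSeries_X]
    congr 1
    rw [HahnSeries.C_apply, HahnSeries.single_mul_single, HahnSeries.single_mul_single]
    norm_num
  rw [h1]
  apply IsUnit.mul
  · exact IsUnit.of_mul_eq_one (HahnSeries.single (1 : ℤ) (1 : R)) (by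
      rw [HahnSeries.single_mul_single, neg_add_cancel, one_mul]; rfl)
  · rw [← map_one (HahnSeries.ofPowerSeries ℤ R), ← map_sub]
    apply IsUnit.map
    rw [PowerSeries.isUnit_iff_constantCoeff]
    simp

/-- `spow` in terms of `ufac`. -/
lemma spow_def (α : ℤ → R) (k : ℤ) : spow α k =
    if 0 ≤ k then ∏ i ∈ Finset.Icc 1 k, ufac (α i)
    else ∏ i ∈ Finset.Icc (k + 1) 0, Ring.inverse (ufac (α i)) := rfl

lemma isUnit_spow (α : ℤ → R) (k : ℤ) : IsUnit (spow α k) := by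
  rw [spow_def]
  split
  · exact Finset.prod_induction _ IsUnit (fun _ _ => IsUnit.mul) isUnit_one
      fun i _ => isUnit_ufac _
  · exact Finset.prod_induction _ IsUnit (fun _ _ => IsUnit.mul) isUnit_one
      fun i _ => (isUnit_ufac (α i)).ringInverse

lemma spow_zero (α : ℤ → R) : spow α 0 = 1 := by
  rw [spow_def, if_pos le_rfl, Finset.Icc_eq_empty (by omega), Finset.prod_empty]

lemma spow_succ (α : ℤ → R) (k : ℤ) :
    spow α (k + 1) = spow α k * ufac (α (k + 1)) := by
  rcases lt_trichotomy k (-1) with hk | hk | hk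
  · have h0 : ¬ (0 ≤ k + 1) := by omega
    have h1 : ¬ (0 ≤ k) := by omega
    rw [spow_def, spow_def, if_neg h0, if_neg h1]
    have hicc : Finset.Icc (k + 1) 0 = insert (k + 1) (Finset.Icc (k + 1 + 1) 0) := by
      ext x; simp [Finset.mem_Icc]; omega
    rw [hicc, Finset.prod_insert (by simp), mul_comm (Ring.inverse (ufac (α (k + 1)))),
      mul_assoc, Ring.inverse_mul_cancel _ (isUnit_ufac _), mul_one]
  · subst hk
    rw [show (-1 : ℤ) + 1 = 0 from rfl, spow_zero, spow_def, if_neg (by omega)]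
    rw [show (-1 : ℤ) + 1 = 0 from rfl, Finset.Icc_self, Finset.prod_singleton,
      Ring.inverse_mul_cancel _ (isUnit_ufac _)]
  · have h0 : 0 ≤ k + 1 := by omega
    have h1 : 0 ≤ k := by omega
    rw [spow_def, spow_def, if_pos h0, if_pos h1]
    have hicc : Finset.Icc (1 : ℤ) (k + 1) = insert (k + 1) (Finset.Icc 1 k) := by
      ext x; simp [Finset.mem_Icc]; omega
    rw [hicc, Finset.prod_insert (by simp), mul_comm]

lemma spow_succ' (α : ℤ → R) (k : ℤ) :
    spow α k = spow α (k - 1) * ufac (α k) := by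
  have h := spow_succ α (k - 1)
  rwa [sub_add_cancel] at h

lemma spow_pred (α : ℤ → R) (k : ℤ) :
    spow α (k - 1) = spow α k * Ring.inverse (ufac (α k)) := by
  rw [spow_succ' α k, mul_assoc, Ring.mul_inverse_cancel _ (isUnit_ufac _), mul_one]

lemma spow_shift_left (α : ℤ → R) (k : ℤ) :
    spow (fun i => α (i - 1)) k = ufac (α 0) * spow α (k - 1) := by
  induction k using Int.induction_on with
  | zero =>
    rw [spow_zero, spow_pred α 0, spow_zero, one_mul,
      Ring.mul_inverse_cancel _ (isUnit_ufac _)]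
  | succ n ih =>
    rw [spow_succ (fun i => α (i - 1)) (n : ℤ), ih, add_sub_cancel_right,
      spow_succ' α (n : ℤ)]
    ring
  | pred n ih =>
    rw [spow_pred (fun i => α (i - 1)) (-(n : ℤ)), ih,
      show (-(n : ℤ) - 1 - 1) = (-(n : ℤ) - 1) - 1 by ring, spow_pred α (-(n : ℤ) - 1)]
    ring

theorem shifted_power_shift (α : ℤ → R) (k : ℤ) :
    spow (fun i => α (i - 1)) k
        = spow α k + HahnSeries.C (α k - α 0) * spow α (k - 1) ∧
      Ring.inverse (spow (fun i => α (i + 1)) k)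
        = Ring.inverse (spow α k)
            + HahnSeries.C (α (k + 1) - α 1) * Ring.inverse (spow α (k + 1)) := by
  constructor
  · have hu : ufac (α 0) = ufac (α k) + HahnSeries.C (α k - α 0) := by
      rw [ufac, ufac, map_sub]; ring
    rw [spow_shift_left α k, hu, add_mul, mul_comm (ufac (α k)), ← spow_succ']
  · -- `spow α (k+1) = ufac (α 1) * spow (fun i => α (i+1)) k`
    have h := spow_shift_left (fun i => α (i + 1)) (k + 1)
    have he : (fun i => (fun j => α (j + 1)) (i - 1)) = α := by
      funext i; show α (i - 1 + 1) = α i; rw [sub_add_cancel]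
    rw [he, add_sub_cancel_right] at h
    rw [zero_add] at h
    -- take inverses
    have hinv : Ring.inverse (spow (fun i => α (i + 1)) k)
        = ufac (α 1) * Ring.inverse (spow α (k + 1)) := by
      rw [h, Ring.mul_inverse_rev,
        mul_comm (Ring.inverse (spow (fun i => α (i + 1)) k)), ← mul_assoc,
        Ring.mul_inverse_cancel _ (isUnit_ufac _), one_mul]
    have hu : ufac (α 1) = ufac (α (k + 1)) + HahnSeries.C (α (k + 1) - α 1) := by
      rw [ufac, ufac, map_sub]; ring
    have hk : ufac (α (k + 1)) * Ring.inverse (spow α (k + 1)) = Ring.inverse (spow α k) := by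
      rw [spow_succ α k, Ring.mul_inverse_rev, ← mul_assoc,
        Ring.mul_inverse_cancel _ (isUnit_ufac _), one_mul]
    rw [hinv, hu, add_mul, hk]
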